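/- Let {X_n} be Banach spaces, U a free ultrafilter on ℕ, and T_n ∈ L(X_n) with sup_n ‖T_n‖ = M < ∞. Then v((T_n)_U) ≤ lim_U v(T_n). -/

import Mathlib

open Filter Metric ENNReal

noncomputable def nradius {E : Type*} [SeminormedAddCommGroup E] [NormedSpace ℝ E]
    (T : E →L[ℝ] E) : ℝ :=
  sSup {r : ℝ | ∃ (x : E) (f : E →L[ℝ] ℝ), ‖x‖ = 1 ∧ ‖f‖ = 1 ∧ f x = 1 ∧ r = |f (T x)|}

lemma nradius_nonneg {E : Type*} [SeminormedAddCommGroup E] [NormedSpace ℝ E]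
    (T : E →L[ℝ] E) : 0 ≤ nradius T := by
  apply Real.sSup_nonneg
  rintro r ⟨x, f, _, _, _, rfl⟩
  positivity

lemma nradius_neg {E : Type*} [SeminormedAddCommGroup E] [NormedSpace ℝ E]
    (T : E →L[ℝ] E) : nradius (-T) = nradius T := by
  unfold nradius
  congr 1
  ext r
  constructor <;> rintro ⟨x, f, h1, h2, h3, rfl⟩ <;>
    exact ⟨x, f, h1, h2, h3, by simp⟩

lemma nradius_bdd {E : Type*} [SeminormedAddCommGroup E] [NormedSpace ℝ E]
    {T : E →L[ℝ] E} {M : ℝ} (hT : ‖T‖ ≤ M) :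
    M ∈ upperBounds {r : ℝ | ∃ (x : E) (f : E →L[ℝ] ℝ), ‖x‖ = 1 ∧ ‖f‖ = 1 ∧ f x = 1 ∧ r = |f (T x)|} := by
  rintro r ⟨x, f, hx, hf, _, rfl⟩
  have h1 : |f (T x)| ≤ ‖f‖ * ‖T x‖ := by
    simpa [Real.norm_eq_abs] using f.le_opNorm (T x)
  have h2 : ‖T x‖ ≤ ‖T‖ * ‖x‖ := T.le_opNorm x
  calc |f (T x)| ≤ ‖f‖ * ‖T x‖ := h1
    _ = ‖T x‖ := by rw [hf, one_mul]
    _ ≤ ‖T‖ * ‖x‖ := h2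
    _ = ‖T‖ := by rw [hx, mul_one]
    _ ≤ M := hT

lemma nradius_le {E : Type*} [SeminormedAddCommGroup E] [NormedSpace ℝ E]
    {T : E →L[ℝ] E} {M : ℝ} (hT : ‖T‖ ≤ M) : nradius T ≤ M :=
  Real.sSup_le (fun _ hr => nradius_bdd hT hr) ((norm_nonneg T).trans hT)

/-- Pointwise key estimate: `‖y + s • S y‖ ≤ (1 + s v(S) + 4 M² s²) c` for `‖y‖ ≤ c`. -/
lemma key_pointwise {E : Type*} [NormedAddCommGroup E] [NormedSpace ℝ E]
    (S : E →L[ℝ] E) (M : ℝ) (hS : ‖S‖ ≤ M) (s : ℝ) (hs : 0 ≤ s) (hsM : s * M ≤ 1/2)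
    (y : E) (c : ℝ) (hy : ‖y‖ ≤ c) :
    ‖y + s • S y‖ ≤ (1 + s * nradius S + 4 * M ^ 2 * s ^ 2) * c := by
  have hM0 : 0 ≤ M := (norm_nonneg S).trans hS
  have hc0 : 0 ≤ c := (norm_nonneg y).trans hy
  set v := nradius S with hv
  have hv0 : 0 ≤ v := nradius_nonneg S
  have hvM : v ≤ M := nradius_le hS
  set u := y + s • S y with hu
  by_cases h0 : u = 0
  · rw [h0, norm_zero]
    have h1 : 0 ≤ s * v := mul_nonneg hs hv0
    have h2 : 0 ≤ 4 * M ^ 2 * s ^ 2 := by positivity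
    exact mul_nonneg (by linarith) hc0
  · obtain ⟨f, hf1, hfu⟩ := exists_dual_vector ℝ u (norm_ne_zero_iff.mpr h0)
    have hfu2 : f u = ‖u‖ := by exact_mod_cast hfu
    have hu0 : 0 < ‖u‖ := norm_pos_iff.mpr h0
    set x' : E := ‖u‖⁻¹ • u with hx'def
    have hx' : ‖x'‖ = 1 := by
      rw [hx'def, norm_smul, norm_inv, norm_norm, inv_mul_cancel₀ hu0.ne']
    have hfx' : f x' = 1 := by
      rw [hx'def, map_smul]
      simp only [smul_eq_mul]
      rw [hfu2]
      exact inv_mul_cancel₀ hu0.ne'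
    -- f (S x') ≤ v
    have hmem : |f (S x')| ∈ {r : ℝ | ∃ (x : E) (g : E →L[ℝ] ℝ), ‖x‖ = 1 ∧ ‖g‖ = 1 ∧ g x = 1 ∧ r = |g (S x)|} :=
      ⟨x', f, hx', hf1, hfx', rfl⟩
    have hfSx' : f (S x') ≤ v :=
      (le_abs_self _).trans (le_csSup ⟨M, nradius_bdd hS⟩ hmem)
    -- identity
    have hSu : S u = ‖u‖ • S x' := by
      rw [hx'def, map_smul, smul_smul, mul_inv_cancel₀ hu0.ne', one_smul]
    have hid : f u = f y + s * (‖u‖ * f (S x')) - s ^ 2 * f (S (S y)) := by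
      have h1 : f u = f y + s * f (S y) := by
        rw [hu]; simp [map_add, map_smul, smul_eq_mul]
      have h2 : f (S u) = f (S y) + s * f (S (S y)) := by
        rw [hu]; simp [map_add, map_smul, smul_eq_mul]
      have h3 : f (S u) = ‖u‖ * f (S x') := by
        rw [hSu, map_smul, smul_eq_mul]
      rw [h1]
      have h4 : f (S y) = ‖u‖ * f (S x') - s * f (S (S y)) := by
        rw [← h3, h2]; ring
      rw [h4]; ring
    have hfy : f y ≤ c := by
      calc f y ≤ |f y| := le_abs_self _
        _ ≤ ‖f‖ * ‖y‖ := by simpa [Real.norm_eq_abs] using f.le_opNorm y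
        _ ≤ c := by rw [hf1, one_mul]; exact hy
    have hfSSy : |f (S (S y))| ≤ M ^ 2 * c := by
      calc |f (S (S y))| ≤ ‖f‖ * ‖S (S y)‖ := by
            simpa [Real.norm_eq_abs] using f.le_opNorm (S (S y))
        _ = ‖S (S y)‖ := by rw [hf1, one_mul]
        _ ≤ ‖S‖ * ‖S y‖ := S.le_opNorm _
        _ ≤ M * (M * c) := by
            apply mul_le_mul hS _ (norm_nonneg _) hM0
            calc ‖S y‖ ≤ ‖S‖ * ‖y‖ := S.le_opNorm _
              _ ≤ M * c := mul_le_mul hS hy (norm_nonneg _) hM0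
        _ = M ^ 2 * c := by ring
    set N := ‖u‖ with hN
    have heq : N = f y + s * (N * f (S x')) - s ^ 2 * f (S (S y)) := by
      rw [← hid]; exact hfu2.symm
    have hkey : N ≤ c + s * (N * v) + s ^ 2 * (M ^ 2 * c) := by
      have h1 : s * (N * f (S x')) ≤ s * (N * v) :=
        mul_le_mul_of_nonneg_left (mul_le_mul_of_nonneg_left hfSx' hu0.le) hs
      have h2 : -(s ^ 2 * f (S (S y))) ≤ s ^ 2 * (M ^ 2 * c) := by
        have h2' : -f (S (S y)) ≤ M ^ 2 * c := (neg_le_abs _).trans hfSSy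
        calc -(s ^ 2 * f (S (S y))) = s ^ 2 * (-f (S (S y))) := by ring
          _ ≤ s ^ 2 * (M ^ 2 * c) := mul_le_mul_of_nonneg_left h2' (sq_nonneg s)
      linarith
    have hsv : s * v ≤ 1/2 := (mul_le_mul_of_nonneg_left hvM hs).trans hsM
    have h3 : 0 < 1 - s * v := by linarith
    have h4 : N * (1 - s * v) ≤ c * (1 + s ^ 2 * M ^ 2) := by nlinarith [hkey]
    have hA : v ^ 2 ≤ M ^ 2 := by nlinarith
    have hB : 0 ≤ c * s ^ 2 * (M ^ 2 - v ^ 2) :=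
      mul_nonneg (mul_nonneg hc0 (sq_nonneg s)) (by linarith)
    have hC : 0 ≤ c * s ^ 2 * M ^ 2 * (1 - 2 * (s * v)) :=
      mul_nonneg (by positivity) (by linarith)
    have h5 : c * (1 + s ^ 2 * M ^ 2) ≤ (1 + s * v + 4 * M ^ 2 * s ^ 2) * c * (1 - s * v) := by
      nlinarith [hB, hC]
    exact (mul_le_mul_iff_left₀ h3).mp (h4.trans h5)

noncomputable def nindex (E : Type*) [SeminormedAddCommGroup E] [NormedSpace ℝ E] : ℝ :=
  sInf {r : ℝ | ∃ T : E →L[ℝ] E, ‖T‖ = 1 ∧ r = nradius T}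

noncomputable def nullIdeal (X : ℕ → Type*) [∀ n, NormedAddCommGroup (X n)]
    [∀ n, NormedSpace ℝ (X n)] (U : Ultrafilter ℕ) : Submodule ℝ (lp X ∞) where
  carrier := {f | Tendsto (fun n => ‖f n‖) (U : Filter ℕ) (nhds 0)}
  zero_mem' := by
    simpa using (tendsto_const_nhds : Tendsto (fun _ : ℕ => (0 : ℝ)) (U : Filter ℕ) (nhds 0))
  add_mem' := by
    intro f g hf hg
    have h := hf.add hg
    rw [add_zero] at h
    refine squeeze_zero (fun n => norm_nonneg _) (fun n => ?_) h
    simpa using norm_add_le (f n) (g n)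
  smul_mem' := by
    intro c f hf
    have h := hf.const_mul ‖c‖
    rw [mul_zero] at h
    refine squeeze_zero (fun n => norm_nonneg _) (fun n => ?_) h
    simp [norm_smul]

lemma key_half (X : ℕ → Type*) [∀ n, NormedAddCommGroup (X n)] [∀ n, NormedSpace ℝ (X n)]
    (U : Ultrafilter ℕ)
    (T : ∀ n, X n →L[ℝ] X n) (M : ℝ) (hM : ∀ n, ‖T n‖ ≤ M)
    (Tq : (lp X ∞ ⧸ nullIdeal X U) →L[ℝ] (lp X ∞ ⧸ nullIdeal X U))
    (hTq : ∀ g h : lp X ∞, (∀ n, h n = T n (g n)) →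
      Tq (Submodule.Quotient.mk g) = Submodule.Quotient.mk h)
    (L : ℝ) (hL : Tendsto (fun n => nradius (T n)) (U : Filter ℕ) (nhds L))
    (x : lp X ∞ ⧸ nullIdeal X U) (f : (lp X ∞ ⧸ nullIdeal X U) →L[ℝ] ℝ)
    (hx : ‖x‖ = 1) (hf : ‖f‖ = 1) (hfx : f x = 1) :
    f (Tq x) ≤ L := by
  have hM0 : 0 ≤ M := (norm_nonneg (T 0)).trans (hM 0)
  have hL0 : 0 ≤ L := ge_of_tendsto' hL fun n => nradius_nonneg (T n)
  -- Step A: norm bound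
  have main : ∀ s : ℝ, 0 < s → s * M ≤ 1/2 →
      ‖x + s • Tq x‖ ≤ 1 + s * L + 4 * M ^ 2 * s ^ 2 := by
    intro s hs hsM
    have hφ0 : (1 + s * (L + 0) + 4 * M ^ 2 * s ^ 2) * (1 + 0)
        = 1 + s * L + 4 * M ^ 2 * s ^ 2 := by ring
    have cont : Tendsto (fun ε : ℝ => (1 + s * (L + ε) + 4 * M ^ 2 * s ^ 2) * (1 + ε))
        (nhdsWithin 0 (Set.Ioi 0)) (nhds (1 + s * L + 4 * M ^ 2 * s ^ 2)) := by
      rw [← hφ0]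
      exact (Continuous.tendsto (by fun_prop) 0).mono_left nhdsWithin_le_nhds
    refine ge_of_tendsto cont ?_
    filter_upwards [self_mem_nhdsWithin] with ε hε
    replace hε : 0 < ε := hε
    -- choose a representative of small norm
    obtain ⟨g, hg, hgn⟩ := Submodule.Quotient.norm_mk_lt x hε
    rw [hx] at hgn
    have hgle : ∀ n, ‖g n‖ ≤ 1 + ε := fun n =>
      (lp.norm_apply_le_norm ENNReal.top_ne_zero g n).trans hgn.le
    have hTg : Memℓp (fun n => T n (g n)) ∞ := by
      apply memℓp_infty
      refine ⟨M * (1 + ε), ?_⟩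
      rintro r ⟨n, rfl⟩
      calc ‖T n (g n)‖ ≤ ‖T n‖ * ‖g n‖ := (T n).le_opNorm _
        _ ≤ M * (1 + ε) := mul_le_mul (hM n) (hgle n) (norm_nonneg _) hM0
    set Tg : lp X ∞ := ⟨fun n => T n (g n), hTg⟩ with hTgdef
    have hTgn : ∀ n, Tg n = T n (g n) := fun n => rfl
    set h : lp X ∞ := g + s • Tg with hhdef
    have hhn : ∀ n, h n = g n + s • T n (g n) := fun n => by
      rw [hhdef]
      simp only [lp.coeFn_add, lp.coeFn_smul, Pi.add_apply, Pi.smul_apply, hTgn]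
    have hmkh : Submodule.Quotient.mk h = x + s • Tq x := by
      have h1 : Tq (Submodule.Quotient.mk g) = Submodule.Quotient.mk Tg :=
        hTq g Tg fun n => rfl
      rw [hhdef, ← hg, h1]
      simp
    -- coordinatewise bound
    have hbn : ∀ n, ‖h n‖ ≤ (1 + s * nradius (T n) + 4 * M ^ 2 * s ^ 2) * (1 + ε) := fun n => by
      rw [hhn n]
      exact key_pointwise (T n) M (hM n) s hs.le hsM (g n) (1 + ε) (hgle n)
    set B : ℝ := (1 + s * (L + ε) + 4 * M ^ 2 * s ^ 2) * (1 + ε) with hBdef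
    have hB0 : 0 ≤ B := by
      have h1 : 0 ≤ s * (L + ε) := mul_nonneg hs.le (by linarith)
      have h2 : 0 ≤ 4 * M ^ 2 * s ^ 2 := by positivity
      exact mul_nonneg (by linarith) (by linarith)
    have hAU : (fun n => nradius (T n)) ⁻¹' Set.Iio (L + ε) ∈ (U : Filter ℕ) :=
      hL (Iio_mem_nhds (by linarith))
    -- the null perturbation
    have hzmem : Memℓp (fun n => if nradius (T n) < L + ε then (0 : X n) else h n) ∞ := by
      apply memℓp_infty
      refine ⟨(1 + s * M + 4 * M ^ 2 * s ^ 2) * (1 + ε), ?_⟩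
      rintro r ⟨n, rfl⟩
      have hC0 : (0:ℝ) ≤ (1 + s * M + 4 * M ^ 2 * s ^ 2) * (1 + ε) := by
        have h1 : 0 ≤ s * M := mul_nonneg hs.le hM0
        have h2 : 0 ≤ 4 * M ^ 2 * s ^ 2 := by positivity
        exact mul_nonneg (by linarith) (by linarith)
      dsimp only
      split
      · simpa using hC0
      · refine (hbn n).trans ?_
        have hvM : nradius (T n) ≤ M := nradius_le (hM n)
        have := mul_le_mul_of_nonneg_left hvM hs.le
        exact mul_le_mul_of_nonneg_right (by linarith) (by linarith)
    set z : lp X ∞ := ⟨_, hzmem⟩ with hzdef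
    have hzn : ∀ n, z n = if nradius (T n) < L + ε then (0 : X n) else h n := fun n => rfl
    have hznull : z ∈ nullIdeal X U := by
      show Tendsto (fun n => ‖z n‖) (U : Filter ℕ) (nhds 0)
      have heq : (fun n => ‖z n‖) =ᶠ[(U : Filter ℕ)] fun _ => (0:ℝ) := by
        filter_upwards [hAU] with n hn
        have hn' : nradius (T n) < L + ε := hn
        show ‖(if nradius (T n) < L + ε then (0 : X n) else h n)‖ = 0
        rw [if_pos hn', norm_zero]
      exact Tendsto.congr' heq.symm tendsto_const_nhds
    have hnorm : ‖(Submodule.Quotient.mk h : lp X ∞ ⧸ nullIdeal X U)‖ ≤ B := by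
      have h1 : (Submodule.Quotient.mk h : lp X ∞ ⧸ nullIdeal X U)
          = Submodule.Quotient.mk (h - z) := by
        rw [Submodule.Quotient.mk_sub, (Submodule.Quotient.mk_eq_zero _).mpr hznull, sub_zero]
      rw [h1]
      refine (Submodule.Quotient.norm_mk_le _ _).trans ?_
      apply lp.norm_le_of_forall_le hB0
      intro n
      have hsub : (h - z) n = h n - z n := by
        simp only [lp.coeFn_sub, Pi.sub_apply]
      by_cases hn : nradius (T n) < L + ε
      · rw [hsub, hzn n, if_pos hn, sub_zero]
        refine (hbn n).trans ?_
        have := mul_le_mul_of_nonneg_left hn.le hs.le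
        exact mul_le_mul_of_nonneg_right (by linarith) (by linarith)
      · rw [hsub, hzn n, if_neg hn, sub_self, norm_zero]
        exact hB0
    calc ‖x + s • Tq x‖ = ‖(Submodule.Quotient.mk h : lp X ∞ ⧸ nullIdeal X U)‖ := by
          rw [hmkh]
      _ ≤ B := hnorm
  -- Step B
  have step2 : ∀ s : ℝ, 0 < s → s * M ≤ 1/2 → f (Tq x) ≤ L + 4 * M ^ 2 * s := by
    intro s hs hsM
    have h1 : 1 + s * f (Tq x) ≤ ‖x + s • Tq x‖ := by
      have he : f (x + s • Tq x) = 1 + s * f (Tq x) := by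
        rw [map_add, map_smul, hfx, smul_eq_mul]
      rw [← he]
      calc f (x + s • Tq x) ≤ |f (x + s • Tq x)| := le_abs_self _
        _ ≤ ‖f‖ * ‖x + s • Tq x‖ := by rw [← Real.norm_eq_abs]; exact f.le_opNorm _
        _ = ‖x + s • Tq x‖ := by rw [hf, one_mul]
    have h2 := (h1.trans (main s hs hsM))
    have h3 : s * f (Tq x) ≤ s * (L + 4 * M ^ 2 * s) := by nlinarith [h2]
    exact (mul_le_mul_iff_right₀ hs).mp h3
  -- conclude
  by_contra hcon
  push_neg at hcon
  set δ := f (Tq x) - L with hδdef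
  have hδ : 0 < δ := by simp only [hδdef]; linarith
  have hM1 : (0:ℝ) < M + 1 := by linarith
  set s := min (1 / (2 * (M + 1))) (δ / (4 * M ^ 2 + 1)) with hsdef
  have hs0 : 0 < s := lt_min (by positivity) (by positivity)
  have hsM : s * M ≤ 1/2 := by
    have h1 : s ≤ 1 / (2 * (M + 1)) := min_le_left _ _
    have h2 := mul_le_mul_of_nonneg_right h1 hM0
    have h3 : 1 / (2 * (M + 1)) * M ≤ 1/2 := by
      rw [div_mul_eq_mul_div, div_le_iff₀ (by positivity)]
      nlinarith
    linarith
  have h4 : 4 * M ^ 2 * s < δ := by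
    have h1 : s ≤ δ / (4 * M ^ 2 + 1) := min_le_right _ _
    have h2 := mul_le_mul_of_nonneg_left h1 (by positivity : (0:ℝ) ≤ 4 * M ^ 2)
    have h3 : 4 * M ^ 2 * (δ / (4 * M ^ 2 + 1)) < δ := by
      rw [mul_div_assoc', div_lt_iff₀ (by positivity)]
      nlinarith
    linarith
  have := step2 s hs0 hsM
  simp only [hδdef] at h4
  linarith

theorem ultraproduct_nradius_le
    (X : ℕ → Type*) [∀ n, NormedAddCommGroup (X n)] [∀ n, NormedSpace ℝ (X n)]
    [∀ n, CompleteSpace (X n)]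
    (U : Ultrafilter ℕ) (hU : (U : Filter ℕ) ≤ Filter.cofinite)
    (T : ∀ n, X n →L[ℝ] X n) (M : ℝ) (hM : ∀ n, ‖T n‖ ≤ M)
    (Tq : (lp X ∞ ⧸ nullIdeal X U) →L[ℝ] (lp X ∞ ⧸ nullIdeal X U))
    (hTq : ∀ g h : lp X ∞, (∀ n, h n = T n (g n)) →
      Tq (Submodule.Quotient.mk g) = Submodule.Quotient.mk h)
    (L : ℝ) (hL : Tendsto (fun n => nradius (T n)) (U : Filter ℕ) (nhds L)) :
    nradius Tq ≤ L := by
  have hL0 : 0 ≤ L := ge_of_tendsto' hL fun n => nradius_nonneg (T n)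
  apply Real.sSup_le _ hL0
  rintro r ⟨x, f, hx, hf, hfx, rfl⟩
  rw [abs_le]
  constructor
  · -- use the negated operators
    have hM' : ∀ n, ‖-(T n)‖ ≤ M := fun n => by rw [norm_neg]; exact hM n
    have hTq' : ∀ g h : lp X ∞, (∀ n, h n = (-(T n)) (g n)) →
        (-Tq) (Submodule.Quotient.mk g) = Submodule.Quotient.mk h := by
      intro g h hh
      have h1 : Tq (Submodule.Quotient.mk g) = Submodule.Quotient.mk (-h) := by
        apply hTq g (-h)
        intro n
        have : (-h) n = -(h n) := by simp [lp.coeFn_neg]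
        rw [this, hh n]
        simp
      have : (-Tq) (Submodule.Quotient.mk g) = -(Tq (Submodule.Quotient.mk g)) := rfl
      rw [this, h1]
      simp
    have hL' : Tendsto (fun n => nradius (-(T n))) (U : Filter ℕ) (nhds L) := by
      simpa [nradius_neg] using hL
    have := key_half X U (fun n => -(T n)) M hM' (-Tq) hTq' L hL' x f hx hf hfx
    simp only [ContinuousLinearMap.neg_apply, map_neg] at this
    linarith
  · exact key_half X U T M hM Tq hTq L hL x f hx hf hfx
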